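/- Let n ≥ 0, r ≥ 2 and 1 ≤ t ≤ r−1 be integers. Then the total number of different part sizes appearing at least t times in all partitions of n with no part repeated more than r−1 times equals the total number of consecutive differences that are at least t in all r-flat partitions of n: Σ_{λ∈D_r(n)} ℓ̄_t(λ) = Σ_{λ∈F_r(n)} d_t(λ). -/

import Mathlib

open scoped Classical

namespace BeckPaper

/-- The parts of a partition, sorted in non-increasing order. -/
def partsList {n : ℕ} (p : n.Partition) : List ℕ := p.parts.sort (· ≥ ·)

/-- The `i`-th part of a partition (`1`-indexed); `0` if `i` exceeds the number of parts. -/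
def part {n : ℕ} (p : n.Partition) (i : ℕ) : ℕ := (partsList p).getD (i - 1) 0

/-- `ℓ(λ)`: the number of parts of `λ`. -/
def numParts {n : ℕ} (p : n.Partition) : ℕ := Multiset.card p.parts

/-- `ℓ_t(λ)`: the number of parts of `λ` congruent to `t` modulo `r`. -/
def lMod (r t : ℕ) {n : ℕ} (p : n.Partition) : ℕ :=
  Multiset.card (p.parts.filter (fun x => x % r = t % r))

/-- `ℓ̄_t(λ)`: the number of different part sizes appearing at least `t` times in `λ`. -/
def lRep (t : ℕ) {n : ℕ} (p : n.Partition) : ℕ :=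
  (p.parts.toFinset.filter (fun s => t ≤ p.parts.count s)).card

/-- `ℓ̄(λ)`: the number of different part sizes of `λ`. -/
def lDist {n : ℕ} (p : n.Partition) : ℕ := p.parts.toFinset.card

/-- `d_t(λ)`: the number of indices `1 ≤ i ≤ ℓ(λ)` with `λ_i − λ_{i+1} ≥ t`. -/
def dCount (t : ℕ) {n : ℕ} (p : n.Partition) : ℕ :=
  ((Finset.Icc 1 (numParts p)).filter (fun i => t ≤ part p i - part p (i + 1))).card

/-- `λ ∈ O_r(n)`: no part is divisible by `r`. -/
def IsRegular (r : ℕ) {n : ℕ} (p : n.Partition) : Prop := ∀ x ∈ p.parts, ¬ r ∣ x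

/-- `λ ∈ D_r(n)`: no part appears more than `r − 1` times. -/
def IsRestricted (r : ℕ) {n : ℕ} (p : n.Partition) : Prop :=
  ∀ s : ℕ, p.parts.count s ≤ r - 1

/-- `λ ∈ F_r(n)`: all differences of consecutive parts (with `λ_{k+1} = 0`) are `≤ r − 1`. -/
def IsFlat (r : ℕ) {n : ℕ} (p : n.Partition) : Prop :=
  ∀ i, 1 ≤ i → i ≤ numParts p → part p i - part p (i + 1) ≤ r - 1

/-- `λ ∈ O_{1,r}(n)`: the set of part sizes divisible by `r` has exactly one element. -/
def IsOneRegular (r : ℕ) {n : ℕ} (p : n.Partition) : Prop :=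
  (p.parts.toFinset.filter (fun s => r ∣ s)).card = 1

/-- `λ ∈ D_{1,r}(n)`: exactly one part size appears at least `r` times. -/
def IsOneRestricted (r : ℕ) {n : ℕ} (p : n.Partition) : Prop :=
  (p.parts.toFinset.filter (fun s => r ≤ p.parts.count s)).card = 1

/-- `λ ∈ F_{1,r}(n)`: exactly one difference of consecutive parts is `≥ r`, and all
other such differences are `≤ r − 1`. -/
def IsOneFlat (r : ℕ) {n : ℕ} (p : n.Partition) : Prop :=
  ∃ i, (1 ≤ i ∧ i ≤ numParts p ∧ r ≤ part p i - part p (i + 1)) ∧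
    ∀ j, 1 ≤ j → j ≤ numParts p → j ≠ i → part p j - part p (j + 1) ≤ r - 1

/-- `λ ∈ T_r(n)`: exactly one part size has multiplicity at least `r`, and that
multiplicity is strictly less than `2r`. -/
def IsInT (r : ℕ) {n : ℕ} (p : n.Partition) : Prop :=
  ∃ s : ℕ, (r ≤ p.parts.count s ∧ p.parts.count s < 2 * r) ∧
    ∀ s' : ℕ, r ≤ p.parts.count s' → s' = s


theorem sorted_getD_iff : ∀ (l : List ℕ), l.Pairwise (· ≥ ·) → ∀ (i j : ℕ), 1 ≤ j →
    (j ≤ l.getD i 0 ↔ i < (l.filter (fun x => j ≤ x)).length) := by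
  intro l
  induction l with
  | nil => intro _ i j hj; simp [Nat.not_succ_le_zero, hj]; omega
  | cons a l ih =>
    intro hs i j hj
    have hs' : l.Pairwise (· ≥ ·) := hs.tail
    have hall : ∀ x ∈ l, x ≤ a := fun x hx => List.rel_of_pairwise_cons hs hx
    cases i with
    | zero =>
      simp only [List.getD_cons_zero]
      by_cases h : j ≤ a
      · simp [List.filter_cons, h]
      · constructor
        · intro h'; exact absurd h' h
        · intro h'
          exfalso
          rw [List.filter_cons] at h'
          simp only [h, decide_eq_true_eq, if_neg] at h'
          have : (l.filter (fun x => j ≤ x)).length = 0 := by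
            rw [List.length_eq_zero_iff]
            rw [List.filter_eq_nil_iff]
            intro x hx
            simp only [decide_eq_true_eq]
            intro hjx
            exact h (hjx.trans (hall x hx))
          simp [this] at h'
    | succ i =>
      simp only [List.getD_cons_succ]
      rw [ih hs' i j hj, List.filter_cons]
      by_cases h : j ≤ a
      · simp [h]
      · simp only [h, decide_eq_true_eq, if_neg]
        have : (l.filter (fun x => j ≤ x)).length = 0 := by
          rw [List.length_eq_zero_iff, List.filter_eq_nil_iff]
          intro x hx
          simp only [decide_eq_true_eq]
          intro hjx
          exact h (hjx.trans (hall x hx))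
        simp [this]


theorem list_eq_of_getD : ∀ (l m : List ℕ), (∀ x ∈ l, 0 < x) → (∀ x ∈ m, 0 < x) →
    (∀ i, l.getD i 0 = m.getD i 0) → l = m := by
  intro l
  induction l with
  | nil =>
    intro m _ hm h
    cases m with
    | nil => rfl
    | cons b m =>
      have := h 0
      simp at this
      exact absurd this.symm (Nat.ne_of_gt (hm b (by simp)))
  | cons a l ih =>
    intro m hl hm h
    cases m with
    | nil =>
      have := h 0
      simp at this
      exact absurd this (Nat.ne_of_gt (hl a (by simp)))
    | cons b m =>
      have h0 := h 0
      simp at h0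
      have : l = m := ih m (fun x hx => hl x (by simp [hx])) (fun x hx => hm x (by simp [hx]))
        (fun i => by have := h (i+1); simpa using this)
      rw [h0, this]


/-- `fcount p j`: the number of parts of `p` that are `≥ j`. -/
def fcount {n : ℕ} (p : n.Partition) (j : ℕ) : ℕ :=
  Multiset.card (p.parts.filter (fun x => j ≤ x))

theorem coe_partsList {n : ℕ} (p : n.Partition) : (partsList p : Multiset ℕ) = p.parts :=
  Multiset.sort_eq _ _

theorem sorted_partsList {n : ℕ} (p : n.Partition) : (partsList p).Pairwise (· ≥ ·) :=
  Multiset.pairwise_sort _ _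

theorem mem_partsList {n : ℕ} (p : n.Partition) {x : ℕ} :
    x ∈ partsList p ↔ x ∈ p.parts := Multiset.mem_sort _

/-- Galois correspondence: `j ≤ λ_i ↔ i ≤ #{parts ≥ j}`. -/
theorem galois {n : ℕ} (p : n.Partition) {i j : ℕ} (hi : 1 ≤ i) (hj : 1 ≤ j) :
    j ≤ part p i ↔ i ≤ fcount p j := by
  unfold part fcount
  rw [← coe_partsList p, Multiset.filter_coe, Multiset.coe_card,
    sorted_getD_iff (partsList p) (sorted_partsList p) (i-1) j hj]
  omega

theorem part_antitone {n : ℕ} (p : n.Partition) {i i' : ℕ} (hi : 1 ≤ i) (h : i ≤ i') :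
    part p i' ≤ part p i := by
  rcases Nat.eq_zero_or_pos (part p i') with h0 | h0
  · omega
  · have h1 : 1 ≤ i' := le_trans hi h
    have := (galois p h1 h0).mp le_rfl
    exact (galois p hi h0).mpr (le_trans h this)

theorem le_part_one {n : ℕ} (p : n.Partition) {x : ℕ} (hx : x ∈ p.parts) : x ≤ part p 1 := by
  have hx1 : 1 ≤ x := p.parts_pos hx
  refine (galois p le_rfl hx1).mpr ?_
  have : x ∈ p.parts.filter (fun y => x ≤ y) := Multiset.mem_filter.mpr ⟨hx, le_rfl⟩
  have := Multiset.card_pos_iff_exists_mem.mpr ⟨x, this⟩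
  exact this

theorem fcount_one {n : ℕ} (p : n.Partition) : fcount p 1 = numParts p := by
  unfold fcount numParts
  congr 1
  rw [Multiset.filter_eq_self]
  exact fun x hx => p.parts_pos hx

/-- Auxiliary sum swap for multisets. -/
theorem sum_map_sum {α : Type*} (s : Finset ℕ) (m : Multiset α) (f : ℕ → α → ℕ) :
    ∑ i ∈ s, (m.map (f i)).sum = (m.map (fun x => ∑ i ∈ s, f i x)).sum := by
  induction m using Multiset.induction with
  | empty => simp
  | cons a m ih => simp [Finset.sum_add_distrib, ih]

/-- The conjugate partition. -/
def conj {n : ℕ} (p : n.Partition) : n.Partition where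
  parts := (Finset.Icc 1 (part p 1)).val.map (fun i => fcount p i)
  parts_pos := by
    intro i hi
    simp only [Multiset.mem_map] at hi
    obtain ⟨j, hj, rfl⟩ := hi
    rw [← Finset.mem_def, Finset.mem_Icc] at hj
    exact (galois p le_rfl hj.1).mp hj.2
  parts_sum := by
    have key : ∀ i, fcount p i = (p.parts.map (fun x => if i ≤ x then 1 else 0)).sum := by
      intro i
      unfold fcount
      induction p.parts using Multiset.induction with
      | empty => simp
      | cons a m ih =>
        by_cases h : i ≤ a <;> simp [Multiset.filter_cons, h, ih, Nat.add_comm]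
    have h1 : ((Finset.Icc 1 (part p 1)).val.map (fun i => fcount p i)).sum
        = ∑ i ∈ Finset.Icc 1 (part p 1), fcount p i := rfl
    rw [h1]
    have h2 : ∀ x ∈ p.parts, (∑ i ∈ Finset.Icc 1 (part p 1), if i ≤ x then 1 else 0) = x := by
      intro x hx
      have hx1 : 1 ≤ x := p.parts_pos hx
      have hxM : x ≤ part p 1 := le_part_one p hx
      rw [Finset.sum_ite, Finset.sum_const, Finset.sum_const]
      simp only [smul_eq_mul, mul_one, mul_zero, add_zero]
      have : (Finset.Icc 1 (part p 1)).filter (fun i => i ≤ x) = Finset.Icc 1 x := by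
        ext i
        simp only [Finset.mem_filter, Finset.mem_Icc]
        omega
      rw [this, Nat.card_Icc]
      omega
    calc ∑ i ∈ Finset.Icc 1 (part p 1), fcount p i
        = ∑ i ∈ Finset.Icc 1 (part p 1), (p.parts.map (fun x => if i ≤ x then 1 else 0)).sum := by
          simp only [key]
      _ = (p.parts.map (fun x => ∑ i ∈ Finset.Icc 1 (part p 1), if i ≤ x then 1 else 0)).sum :=
          sum_map_sum _ _ _
      _ = (p.parts.map id).sum := by rw [Multiset.map_congr rfl (fun x hx => h2 x hx)]; rfl
      _ = n := by rw [Multiset.map_id]; exact p.parts_sum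

theorem fcount_conj {n : ℕ} (p : n.Partition) {j : ℕ} (hj : 1 ≤ j) :
    fcount (conj p) j = part p j := by
  unfold fcount conj
  simp only [Multiset.filter_map]
  rw [Multiset.card_map]
  have h1 : ∀ i ∈ (Finset.Icc 1 (part p 1)).val, (j ≤ fcount p i ↔ i ≤ part p j) := by
    intro i hi
    rw [← Finset.mem_def, Finset.mem_Icc] at hi
    exact (galois p hj hi.1).symm
  have h2 : Multiset.card (Multiset.filter ((fun x => j ≤ x) ∘ fun i => fcount p i)
      (Finset.Icc 1 (part p 1)).val)
      = Multiset.card (Multiset.filter (fun i => i ≤ part p j) (Finset.Icc 1 (part p 1)).val) := by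
    congr 1
    exact Multiset.filter_congr (fun i hi => h1 i hi)
  rw [h2]
  have hpj : part p j ≤ part p 1 := part_antitone p le_rfl hj
  have h3 : Multiset.filter (fun i => i ≤ part p j) (Finset.Icc 1 (part p 1)).val
      = ((Finset.Icc 1 (part p 1)).filter (fun i => i ≤ part p j)).val := rfl
  rw [h3]
  have h4 : (Finset.Icc 1 (part p 1)).filter (fun i => i ≤ part p j)
      = Finset.Icc 1 (part p j) := by
    ext i
    simp only [Finset.mem_filter, Finset.mem_Icc]
    omega
  rw [h4]
  have : Multiset.card (Finset.Icc 1 (part p j)).val = (Finset.Icc 1 (part p j)).card := rfl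
  rw [this, Nat.card_Icc]
  omega

theorem part_conj {n : ℕ} (p : n.Partition) {i : ℕ} (hi : 1 ≤ i) :
    part (conj p) i = fcount p i := by
  have key : ∀ k, 1 ≤ k → (k ≤ part (conj p) i ↔ k ≤ fcount p i) := by
    intro k hk
    rw [galois (conj p) hi hk, fcount_conj p hk, galois p hk hi]
  rcases Nat.eq_zero_or_pos (part (conj p) i) with h0 | h0
  · rcases Nat.eq_zero_or_pos (fcount p i) with h1 | h1
    · omega
    · have := (key _ h1).mpr le_rfl; omega
  · have h2 := (key _ h0).mp le_rfl
    rcases Nat.eq_zero_or_pos (fcount p i) with h1 | h1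
    · omega
    · have h3 := (key _ h1).mpr le_rfl
      omega

theorem part_zero {n : ℕ} (p : n.Partition) : part p 0 = part p 1 := rfl

theorem partition_ext {n : ℕ} (p q : n.Partition)
    (h : ∀ i, 1 ≤ i → part p i = part q i) : p = q := by
  have hl : partsList p = partsList q := by
    apply list_eq_of_getD
    · exact fun x hx => p.parts_pos ((mem_partsList p).mp hx)
    · exact fun x hx => q.parts_pos ((mem_partsList q).mp hx)
    · intro i
      have := h (i+1) (by omega)
      unfold part at this
      simpa using this
  apply Nat.Partition.ext
  rw [← coe_partsList p, ← coe_partsList q, hl]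

theorem conj_conj {n : ℕ} (p : n.Partition) : conj (conj p) = p := by
  apply partition_ext
  intro i hi
  rw [part_conj (conj p) hi, fcount_conj p hi]

theorem count_parts {n : ℕ} (p : n.Partition) {s : ℕ} (hs : 1 ≤ s) :
    p.parts.count s + fcount p (s+1) = fcount p s := by
  unfold fcount
  induction p.parts using Multiset.induction with
  | empty => simp
  | cons a m ih =>
    rcases Nat.lt_trichotomy a s with h | h | h
    · rw [Multiset.count_cons_of_ne (by omega), Multiset.filter_cons_of_neg _ (by omega),
        Multiset.filter_cons_of_neg _ (by omega)]
      exact ih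
    · subst h
      rw [Multiset.count_cons_self, Multiset.filter_cons_of_neg _ (by omega),
        Multiset.filter_cons_of_pos _ (by omega)]
      simp only [Multiset.card_cons]
      omega
    · rw [Multiset.count_cons_of_ne (by omega), Multiset.filter_cons_of_pos _ (by omega),
        Multiset.filter_cons_of_pos _ (by omega)]
      simp only [Multiset.card_cons]
      omega

theorem count_eq_diff {n : ℕ} (p : n.Partition) {s : ℕ} (hs : 1 ≤ s) :
    p.parts.count s = part (conj p) s - part (conj p) (s+1) := by
  rw [part_conj p hs, part_conj p (by omega : 1 ≤ s + 1)]
  have := count_parts p hs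
  omega

theorem numParts_conj {n : ℕ} (p : n.Partition) : numParts (conj p) = part p 1 := by
  unfold numParts conj
  simp only [Multiset.card_map]
  have : Multiset.card (Finset.Icc 1 (part p 1)).val = (Finset.Icc 1 (part p 1)).card := rfl
  rw [this, Nat.card_Icc]
  omega

theorem count_zero_parts {n : ℕ} (p : n.Partition) : p.parts.count 0 = 0 := by
  rw [Multiset.count_eq_zero]
  intro h
  exact absurd (p.parts_pos h) (by omega)

theorem mem_toFinset_bounds {n : ℕ} (p : n.Partition) {s : ℕ} (hs : s ∈ p.parts.toFinset) :
    1 ≤ s ∧ s ≤ part p 1 := by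
  rw [Multiset.mem_toFinset] at hs
  exact ⟨p.parts_pos hs, le_part_one p hs⟩

theorem lRep_eq_dCount_conj {n : ℕ} (p : n.Partition) {t : ℕ} (ht : 1 ≤ t) :
    lRep t p = dCount t (conj p) := by
  unfold lRep dCount
  congr 1
  ext s
  simp only [Finset.mem_filter, Finset.mem_Icc, Multiset.mem_toFinset, numParts_conj]
  constructor
  · rintro ⟨hs, hts⟩
    have h1 : 1 ≤ s := p.parts_pos hs
    have h2 : s ≤ part p 1 := le_part_one p hs
    refine ⟨⟨h1, h2⟩, ?_⟩
    rw [← count_eq_diff p h1]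
    exact hts
  · rintro ⟨⟨h1, h2⟩, hts⟩
    rw [← count_eq_diff p h1] at hts
    have : s ∈ p.parts := Multiset.count_pos.mp (by omega)
    exact ⟨this, hts⟩

theorem restricted_iff_flat {n : ℕ} (p : n.Partition) {r : ℕ} (hr : 2 ≤ r) :
    IsRestricted r p ↔ IsFlat r (conj p) := by
  constructor
  · intro h i hi1 hiM
    rw [← count_eq_diff p hi1]
    exact h i
  · intro h s
    rcases Nat.eq_zero_or_pos s with rfl | hs1
    · rw [count_zero_parts]; omega
    by_cases hsM : s ≤ part p 1
    · have := h s hs1 (by rw [numParts_conj]; exact hsM)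
      rw [← count_eq_diff p hs1] at this
      exact this
    · have : s ∉ p.parts := fun hmem => hsM (le_part_one p hmem)
      rw [Multiset.count_eq_zero_of_notMem this]
      omega

theorem rep_restricted_eq_diff_flat (n r t : ℕ) (hr : 2 ≤ r) (ht1 : 1 ≤ t) (ht2 : t ≤ r - 1) :
    (∑ p ∈ Finset.univ.filter (fun p : n.Partition => IsRestricted r p), lRep t p) =
      ∑ p ∈ Finset.univ.filter (fun p : n.Partition => IsFlat r p), dCount t p := by
  refine Finset.sum_nbij' (i := fun p => conj p) (j := fun p => conj p) ?_ ?_ ?_ ?_ ?_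
  · intro p hp
    simp only [Finset.mem_filter, Finset.mem_univ, true_and] at hp ⊢
    exact (restricted_iff_flat p hr).mp hp
  · intro q hq
    simp only [Finset.mem_filter, Finset.mem_univ, true_and] at hq ⊢
    rw [restricted_iff_flat (conj q) hr, conj_conj]
    exact hq
  · intro p _; exact conj_conj p
  · intro q _; exact conj_conj q
  · intro p _
    exact lRep_eq_dCount_conj p ht1

end BeckPaper
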